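/- Let H be a combinatorial strata structure endowed with a datum (N, {P_J}) of nodal strata. Let B be a nodal separating block of N in H and let B′ be a nodal block of N in H with B′ ≠ B. Then Cl_H(B) ∩ Cl_H(B′) = ∅. -/

import Mathlib

/-- A combinatorial strata structure with minimal set of indices the (finite) type `I`:
an open subset of `𝒫(I)` (i.e. a family closed under taking subsets) containing all
singletons. -/
def IsCSS {I : Type*} (H : Set (Finset I)) : Prop :=
  (∀ J ∈ H, ∀ J' : Finset I, J' ⊆ J → J' ∈ H) ∧ ∀ i : I, ({i} : Finset I) ∈ H

/-- `level H k` is `H(k)`, the set of strata of `H` with exactly `k` elements. -/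
def level {I : Type*} (H : Set (Finset I)) (k : ℕ) : Set (Finset I) :=
  {J ∈ H | J.card = k}

/-- A `k`-path in `H`: a nonempty sequence of strata of `H(k)` such that the union of
any two consecutive entries lies in `H(k+1)`. -/
def IsKPath {I : Type*} [DecidableEq I] (H : Set (Finset I)) (k : ℕ)
    (γ : List (Finset I)) : Prop :=
  γ ≠ [] ∧ (∀ J ∈ γ, J ∈ level H k) ∧
    γ.Chain' fun J J' => (J ∪ J') ∈ level H (k + 1)

/-- The path `γ` joins `J` and `J'`. -/
def Joins {I : Type*} (γ : List (Finset I)) (J J' : Finset I) : Prop :=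
  γ.head? = some J ∧ γ.getLast? = some J'

/-- The subsupport of a path: the sequence of unions of consecutive entries. -/
def subSup {I : Type*} [DecidableEq I] (γ : List (Finset I)) : List (Finset I) :=
  List.zipWith (· ∪ ·) γ γ.tail

open Classical in
/-- `kappa B γ`: the number of entries of the subsupport of `γ` that belong to `B`. -/
noncomputable def kappa {I : Type*} [DecidableEq I] (B : Set (Finset I))
    (γ : List (Finset I)) : ℕ :=
  (subSup γ).countP fun J => decide (J ∈ B)

/-- `A` is `k`-connected in `H`: any two elements of `A` are joined by a `k`-path in `H`
with support contained in `A`. -/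
def KConnectedIn {I : Type*} [DecidableEq I] (H : Set (Finset I)) (k : ℕ)
    (A : Set (Finset I)) : Prop :=
  ∀ J ∈ A, ∀ J' ∈ A, ∃ γ : List (Finset I),
    IsKPath H k γ ∧ Joins γ J J' ∧ ∀ K ∈ γ, K ∈ A

/-- `C` is a `k`-connected component of `A` in `H`: a maximal nonempty `k`-connected
subset of `A`. -/
def IsKComponent {I : Type*} [DecidableEq I] (H : Set (Finset I)) (k : ℕ)
    (A C : Set (Finset I)) : Prop :=
  C.Nonempty ∧ C ⊆ A ∧ KConnectedIn H k C ∧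
    ∀ C' : Set (Finset I), C ⊆ C' → C' ⊆ A → KConnectedIn H k C' → C' = C

/-- `H` is 1-connected: `H(1)` is 1-connected in `H`. -/
def OneConnected {I : Type*} [DecidableEq I] (H : Set (Finset I)) : Prop :=
  KConnectedIn H 1 (level H 1)

/-- One-sided version of an elementary homotopic pair of 1-paths in `H`. -/
def ElemPairCore {I : Type*} [DecidableEq I] (H : Set (Finset I))
    (ε ε' : List (Finset I)) : Prop :=
  ε = ε'
  ∨ (∃ i₁ i₂ : I, ε = [{i₁}, {i₂}, {i₁}] ∧ ε' = [{i₁}])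
  ∨ (∃ i₁ i₂ i₃ : I, ε = [{i₁}, {i₂}] ∧ ε' = [{i₁}, {i₃}, {i₂}] ∧
      IsKPath H 2 [{i₁, i₃}, {i₃, i₂}])

/-- An elementary homotopic pair of 1-paths in `H` (up to swapping the two paths). -/
def ElemPair {I : Type*} [DecidableEq I] (H : Set (Finset I))
    (ε ε' : List (Finset I)) : Prop :=
  ElemPairCore H ε ε' ∨ ElemPairCore H ε' ε

/-- `γ₂` is obtained from `γ₁` by an elementary homotopy. -/
def ElemHomotopy {I : Type*} [DecidableEq I] (H : Set (Finset I))
    (γ₁ γ₂ : List (Finset I)) : Prop :=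
  ∃ δ ε₁ ε₂ ρ : List (Finset I),
    ElemPair H ε₁ ε₂ ∧ γ₁ = δ ++ ε₁ ++ ρ ∧ γ₂ = δ ++ ε₂ ++ ρ

/-- `γ` and `γ'` are homotopically equivalent in `H` with support in `A`: they are linked
by a finite chain of elementary homotopies in which every intermediate 1-path has
support in `A`. -/
def HomotopicIn {I : Type*} [DecidableEq I] (H A : Set (Finset I))
    (γ γ' : List (Finset I)) : Prop :=
  (IsKPath H 1 γ ∧ ∀ J ∈ γ, J ∈ A) ∧
    Relation.ReflTransGen
      (fun g₁ g₂ => ElemHomotopy H g₁ g₂ ∧ IsKPath H 1 g₂ ∧ ∀ J ∈ g₂, J ∈ A) γ γ'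

/-- A 1-connected subset `A ⊆ H(1)` is simply connected in `H`: any two 1-paths in `H`
with support in `A` joining the same strata are homotopically equivalent in `H` with
support in `A`. -/
def SimplyConnectedIn {I : Type*} [DecidableEq I] (H A : Set (Finset I)) : Prop :=
  KConnectedIn H 1 A ∧
    ∀ γ γ' : List (Finset I), IsKPath H 1 γ → IsKPath H 1 γ' →
      (∀ J ∈ γ, J ∈ A) → (∀ J ∈ γ', J ∈ A) →
      γ.head? = γ'.head? → γ.getLast? = γ'.getLast? →
      HomotopicIn H A γ γ'

/-- `H` is simply connected: `H(1)` is simply connected in `H`. -/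
def SimplyConnected {I : Type*} [DecidableEq I] (H : Set (Finset I)) : Prop :=
  SimplyConnectedIn H (level H 1)

/-- The closure of `A` in `H`: the strata of `H` containing some element of `A`. -/
def Cl {I : Type*} (H A : Set (Finset I)) : Set (Finset I) :=
  {J' ∈ H | ∃ J ∈ A, J ⊆ J'}

/-- A datum of nodal strata `(N, {P_J})` in `H`: a subset `N ⊆ H` together with, for each
`J ∈ N`, a partition `P_J = {J₊, J₋}` of `J` into two nonempty parts, such that for every
`J ∈ N` and `J' ⊆ J` one has `J' ∈ N` iff `J' ∩ J₊ ≠ ∅ ≠ J' ∩ J₋`, and in that case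
`P_{J'} = {J' ∩ J₊, J' ∩ J₋}`. -/
structure NodalDatum {I : Type*} [DecidableEq I] (H : Set (Finset I)) : Type _ where
  N : Set (Finset I)
  N_sub : N ⊆ H
  plus : Finset I → Finset I
  minus : Finset I → Finset I
  plus_nonempty : ∀ J ∈ N, (plus J).Nonempty
  minus_nonempty : ∀ J ∈ N, (minus J).Nonempty
  union_eq : ∀ J ∈ N, plus J ∪ minus J = J
  disj : ∀ J ∈ N, Disjoint (plus J) (minus J)
  mem_iff : ∀ J ∈ N, ∀ J' : Finset I, J' ⊆ J →
    (J' ∈ N ↔ (J' ∩ plus J).Nonempty ∧ (J' ∩ minus J).Nonempty)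
  part_eq : ∀ J ∈ N, ∀ J' : Finset I, J' ⊆ J → J' ∈ N →
    ({plus J', minus J'} : Set (Finset I)) = {J' ∩ plus J, J' ∩ minus J}

/-- `N*`: the set of uninterrupted nodal strata, i.e. `J ∈ N` with `Cl_H({J}) ⊆ N`. -/
def Nstar {I : Type*} [DecidableEq I] {H : Set (Finset I)} (D : NodalDatum H) :
    Set (Finset I) :=
  {J ∈ D.N | ∀ J' ∈ H, J ⊆ J' → J' ∈ D.N}

/-- A nodal block of `N` in `H`: a 2-connected component of `N(2) = N ∩ H(2)` in `H`. -/
def IsNodalBlock {I : Type*} [DecidableEq I] {H : Set (Finset I)} (D : NodalDatum H)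
    (B : Set (Finset I)) : Prop :=
  IsKComponent H 2 (D.N ∩ level H 2) B

/-- A nodal separating block: a nodal block contained in `N*`. -/
def IsSepBlock {I : Type*} [DecidableEq I] {H : Set (Finset I)} (D : NodalDatum H)
    (B : Set (Finset I)) : Prop :=
  IsNodalBlock D B ∧ B ⊆ Nstar D

/-- The separator set: the union of all nodal separating blocks. -/
def SepSet {I : Type*} [DecidableEq I] {H : Set (Finset I)} (D : NodalDatum H) :
    Set (Finset I) :=
  ⋃₀ {B | IsSepBlock D B}

/-- `A_B(i)`: the set of `{j} ∈ H(1)` joined to `{i}` by a 1-path `γ` in `H` with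
`κ_B(γ)` even. -/
def ABset {I : Type*} [DecidableEq I] (H B : Set (Finset I)) (i : I) : Set (Finset I) :=
  {J ∈ level H 1 | ∃ γ : List (Finset I),
    IsKPath H 1 γ ∧ Joins γ {i} J ∧ Even (kappa B γ)}

/-- `B_B(i)`: the set of `{j} ∈ H(1)` joined to `{i}` by a 1-path `γ` in `H` with
`κ_B(γ)` odd. -/
def BBset {I : Type*} [DecidableEq I] (H B : Set (Finset I)) (i : I) : Set (Finset I) :=
  {J ∈ level H 1 | ∃ γ : List (Finset I),
    IsKPath H 1 γ ∧ Joins γ {i} J ∧ Odd (kappa B γ)}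


section Aux

variable {I : Type*} [DecidableEq I]

lemma mem_of_getLast?_aux {α : Type*} {l : List α} {a : α}
    (h : l.getLast? = some a) : a ∈ l := by
  induction l with
  | nil => simp at h
  | cons b t ih =>
    cases t with
    | nil =>
      simp only [List.getLast?_singleton, Option.some.injEq] at h
      simp [h]
    | cons c t =>
      rw [List.getLast?_cons_cons] at h
      exact List.mem_cons_of_mem _ (ih h)

lemma isKPath_reverse {H : Set (Finset I)} {k : ℕ} {γ : List (Finset I)}
    (h : IsKPath H k γ) : IsKPath H k γ.reverse := by
  obtain ⟨hne, hmem, hch⟩ := h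
  refine ⟨by simpa using hne, by simpa using hmem, ?_⟩
  unfold List.Chain' at hch ⊢
  rw [List.isChain_reverse]
  refine hch.imp fun a b hab => ?_
  show (b ∪ a) ∈ level H (k + 1)
  rwa [Finset.union_comm]

lemma joins_reverse {γ : List (Finset I)} {J J' : Finset I} (h : Joins γ J J') :
    Joins γ.reverse J' J := by
  obtain ⟨h1, h2⟩ := h
  exact ⟨by rw [List.head?_reverse]; exact h2, by rw [List.getLast?_reverse]; exact h1⟩

lemma isKPath_concat {H : Set (Finset I)} {k : ℕ} {γ₁ γ₂ : List (Finset I)}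
    {X J Y : Finset I}
    (h1 : IsKPath H k γ₁) (h2 : IsKPath H k γ₂)
    (j1 : Joins γ₁ X J) (j2 : Joins γ₂ J Y) :
    ∃ γ : List (Finset I), IsKPath H k γ ∧ Joins γ X Y ∧
      ∀ K ∈ γ, K ∈ γ₁ ∨ K ∈ γ₂ := by
  obtain ⟨hne1, hm1, hc1⟩ := h1
  obtain ⟨hne2, hm2, hc2⟩ := h2
  cases γ₂ with
  | nil => simp [Joins] at j2
  | cons a t =>
    obtain ⟨ja, jY⟩ := j2
    have ha : a = J := by simpa using ja
    subst ha
    refine ⟨γ₁ ++ t, ⟨by simp [hne1], ?_, ?_⟩, ⟨?_, ?_⟩, ?_⟩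
    · intro K hK
      rcases List.mem_append.mp hK with h | h
      · exact hm1 K h
      · exact hm2 K (List.mem_cons_of_mem _ h)
    · unfold List.Chain' at hc1 hc2 ⊢
      rw [List.isChain_append]
      obtain ⟨hhead, htail⟩ := List.isChain_cons.mp hc2
      refine ⟨hc1, htail, ?_⟩
      intro x hx y hy
      have hx' : a = x := by
        have hl := j1.2
        rw [hl] at hx
        simpa using hx
      subst hx'
      exact hhead y hy
    · rw [List.head?_append, j1.1]
      rfl
    · rw [List.getLast?_append]
      cases t with
      | nil =>
        have : a = Y := by simpa using jY
        subst this
        simpa using j1.2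
      | cons c s =>
        have ht : (c :: s).getLast? = some Y := by
          rw [← jY, List.getLast?_cons_cons]
        simp [ht]
    · intro K hK
      rcases List.mem_append.mp hK with h | h
      · exact Or.inl h
      · exact Or.inr (List.mem_cons_of_mem _ h)

lemma component_absorb {H : Set (Finset I)} {k : ℕ} {A B : Set (Finset I)}
    (hB : IsKComponent H k A B) {X J : Finset I} (hX : X ∈ A) (hJ : J ∈ B)
    {γ : List (Finset I)} (hγ : IsKPath H k γ) (hj : Joins γ J X)
    (hsup : ∀ K ∈ γ, K ∈ B ∪ {X}) : X ∈ B := by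
  obtain ⟨hne, hsubA, hconn, hmax⟩ := hB
  have hXlvl : X ∈ level H k := hγ.2.1 X (mem_of_getLast?_aux hj.2)
  have key : ∀ Y ∈ B, ∃ γ' : List (Finset I),
      IsKPath H k γ' ∧ Joins γ' Y X ∧ ∀ K ∈ γ', K ∈ B ∪ {X} := by
    intro Y hY
    obtain ⟨δ, hδ, hδj, hδs⟩ := hconn Y hY J hJ
    obtain ⟨γ', g1, g2, g3⟩ := isKPath_concat hδ hγ hδj hj
    exact ⟨γ', g1, g2, fun K hK =>
      (g3 K hK).elim (fun h => Or.inl (hδs K h)) (fun h => hsup K h)⟩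
  have hC : KConnectedIn H k (B ∪ {X}) := by
    intro Y hY Z hZ
    rcases hY with hY | hY
    · rcases hZ with hZ | hZ
      · obtain ⟨δ, d1, d2, d3⟩ := hconn Y hY Z hZ
        exact ⟨δ, d1, d2, fun K hK => Or.inl (d3 K hK)⟩
      · rw [Set.mem_singleton_iff] at hZ
        subst hZ
        exact key Y hY
    · rw [Set.mem_singleton_iff] at hY
      rcases hZ with hZ | hZ
      · obtain ⟨γ', g1, g2, g3⟩ := key Z hZ
        rw [hY]
        exact ⟨γ'.reverse, isKPath_reverse g1, joins_reverse g2,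
          fun K hK => g3 K (List.mem_reverse.mp hK)⟩
      · rw [Set.mem_singleton_iff] at hZ
        rw [hY, hZ]
        refine ⟨[X], ⟨by simp, by simpa using hXlvl, by exact List.isChain_singleton _⟩, ⟨rfl, by simp⟩, ?_⟩
        intro K hK
        have hKX : K = X := by simpa using hK
        rw [hKX]
        exact Or.inr rfl
  have heq := hmax (B ∪ {X}) Set.subset_union_left
    (Set.union_subset hsubA (by simpa using hX)) hC
  rw [← heq]
  exact Or.inr rfl

lemma components_eq_aux {H : Set (Finset I)} {k : ℕ} {A B B' : Set (Finset I)}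
    (hB : IsKComponent H k A B) (hB' : IsKComponent H k A B')
    (hint : (B ∩ B').Nonempty) : B = B' := by
  obtain ⟨W, hWB, hWB'⟩ := hint
  have toW : ∀ Y ∈ B ∪ B', ∃ γ : List (Finset I),
      IsKPath H k γ ∧ Joins γ Y W ∧ ∀ K ∈ γ, K ∈ B ∪ B' := by
    rintro Y (hY | hY)
    · obtain ⟨γ, g1, g2, g3⟩ := hB.2.2.1 Y hY W hWB
      exact ⟨γ, g1, g2, fun K hK => Or.inl (g3 K hK)⟩
    · obtain ⟨γ, g1, g2, g3⟩ := hB'.2.2.1 Y hY W hWB'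
      exact ⟨γ, g1, g2, fun K hK => Or.inr (g3 K hK)⟩
  have hC : KConnectedIn H k (B ∪ B') := by
    intro Y hY Z hZ
    obtain ⟨γ₁, h11, h12, h13⟩ := toW Y hY
    obtain ⟨γ₂, h21, h22, h23⟩ := toW Z hZ
    obtain ⟨γ, g1, g2, g3⟩ := isKPath_concat h11 (isKPath_reverse h21) h12
      (joins_reverse h22)
    exact ⟨γ, g1, g2, fun K hK =>
      (g3 K hK).elim (h13 K) (fun h => h23 K (List.mem_reverse.mp h))⟩
  have e1 := hB.2.2.2 (B ∪ B') Set.subset_union_left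
    (Set.union_subset hB.2.1 hB'.2.1) hC
  have e2 := hB'.2.2.2 (B ∪ B') Set.subset_union_right
    (Set.union_subset hB.2.1 hB'.2.1) hC
  exact e1.symm.trans e2

end Aux

/-- If `B` is a nodal separating block and `B'` a nodal block with
`B' ≠ B`, then `Cl_H(B) ∩ Cl_H(B') = ∅`. -/
theorem closures_of_distinct_blocks_disjoint
    {I : Type*} [Fintype I] [DecidableEq I] (H : Set (Finset I))
    (hH : IsCSS H) (D : NodalDatum H)
    (B B' : Set (Finset I)) (hB : IsSepBlock D B) (hB' : IsNodalBlock D B')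
    (hne : B' ≠ B) :
    Cl H B ∩ Cl H B' = ∅ := by
  rw [Set.eq_empty_iff_forall_notMem]
  rintro K ⟨⟨hKH, J, hJB, hJK⟩, _hKH', J', hJ'B', hJ'K⟩
  have hBA : B ⊆ D.N ∩ level H 2 := hB.1.2.1
  have hJA := hBA hJB
  have hJ'A := hB'.2.1 hJ'B'
  have hJstar := hB.2 hJB
  have hKN : K ∈ D.N := hJstar.2 K hKH hJK
  have hJN : J ∈ D.N := hJA.1
  have hJ'N : J' ∈ D.N := hJ'A.1
  have hd := D.disj K hKN
  obtain ⟨⟨a, haJ⟩, ⟨b, hbJ⟩⟩ := (D.mem_iff K hKN J hJK).mp hJN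
  obtain ⟨⟨a', ha'J⟩, ⟨b', hb'J⟩⟩ := (D.mem_iff K hKN J' hJ'K).mp hJ'N
  rw [Finset.mem_inter] at haJ hbJ ha'J hb'J
  have hap : a ∈ D.plus K := haJ.2
  have hbm : b ∈ D.minus K := hbJ.2
  have ha'p : a' ∈ D.plus K := ha'J.2
  have hb'm : b' ∈ D.minus K := hb'J.2
  have hdisj : ∀ x ∈ D.plus K, ∀ y ∈ D.minus K, x ≠ y := by
    intro x hx y hy hxy
    subst hxy
    exact (Finset.disjoint_left.mp hd hx) hy
  have hab : a ≠ b := hdisj a hap b hbm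
  have hab' : a ≠ b' := hdisj a hap b' hb'm
  have ha'b' : a' ≠ b' := hdisj a' ha'p b' hb'm
  have hJeq : J = {a, b} := by
    refine (Finset.eq_of_subset_of_card_le ?_ ?_).symm
    · intro x hx
      rcases Finset.mem_insert.mp hx with rfl | hx
      · exact haJ.1
      · rw [Finset.mem_singleton.mp hx]; exact hbJ.1
    · rw [Finset.card_pair hab]
      exact le_of_eq hJA.2.2
  have hJ'eq : J' = {a', b'} := by
    refine (Finset.eq_of_subset_of_card_le ?_ ?_).symm
    · intro x hx
      rcases Finset.mem_insert.mp hx with rfl | hx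
      · exact ha'J.1
      · rw [Finset.mem_singleton.mp hx]; exact hb'J.1
    · rw [Finset.card_pair ha'b']
      exact le_of_eq hJ'A.2.2
  have hKH' : K ∈ H := D.N_sub hKN
  set M : Finset I := {a, b'} with hM
  have hMK : M ⊆ K := by
    intro x hx
    rcases Finset.mem_insert.mp hx with rfl | hx
    · exact hJK haJ.1
    · rw [Finset.mem_singleton.mp hx]; exact hJ'K hb'J.1
  have hMH : M ∈ H := hH.1 K hKH' M hMK
  have hMN : M ∈ D.N := by
    refine (D.mem_iff K hKN M hMK).mpr ⟨⟨a, ?_⟩, ⟨b', ?_⟩⟩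
    · exact Finset.mem_inter.mpr ⟨by simp [hM], hap⟩
    · exact Finset.mem_inter.mpr ⟨by simp [hM], hb'm⟩
  have hMA : M ∈ D.N ∩ level H 2 := ⟨hMN, hMH, Finset.card_pair hab'⟩
  -- Step 1 : M ∈ B
  have hMB : M ∈ B := by
    by_cases hbb' : b = b'
    · have : M = J := by rw [hJeq, hM, hbb']
      rw [this]; exact hJB
    · have huH : J ∪ M ∈ H := by
        refine hH.1 K hKH' _ ?_
        exact Finset.union_subset hJK hMK
      have hucard : (J ∪ M).card = 3 := by
        have : J ∪ M = {a, b, b'} := by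
          rw [hJeq, hM]
          ext x
          simp only [Finset.mem_union, Finset.mem_insert, Finset.mem_singleton]
          tauto
        rw [this]
        rw [Finset.card_insert_of_notMem (by simp [hab, hab']),
          Finset.card_pair hbb']
      have hpath : IsKPath H 2 [J, M] := by
        refine ⟨by simp, ?_, ?_⟩
        · intro K' hK'
          rcases List.mem_cons.mp hK' with rfl | hK'
          · exact hJA.2
          · have : K' = M := by simpa using hK'
            rw [this]; exact hMA.2
        · refine List.isChain_cons_cons.mpr ⟨⟨huH, hucard⟩, by simp⟩
      exact component_absorb hB.1 hMA hJB hpath ⟨rfl, by simp [Joins]⟩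
        (by rintro K' hK'
            rcases List.mem_cons.mp hK' with rfl | hK'
            · exact Or.inl hJB
            · have : K' = M := by simpa using hK'
              rw [this]; exact Or.inr rfl)
  -- Step 2 : J' ∈ B
  have hJ'B : J' ∈ B := by
    by_cases haa' : a = a'
    · have : J' = M := by rw [hJ'eq, hM, haa']
      rw [this]; exact hMB
    · have huH : M ∪ J' ∈ H := by
        refine hH.1 K hKH' _ ?_
        exact Finset.union_subset hMK hJ'K
      have hucard : (M ∪ J').card = 3 := by
        have : M ∪ J' = {b', a, a'} := by
          rw [hJ'eq, hM]
          ext x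
          simp only [Finset.mem_union, Finset.mem_insert, Finset.mem_singleton]
          tauto
        rw [this]
        rw [Finset.card_insert_of_notMem
          (by simp [Ne.symm hab', Ne.symm ha'b']),
          Finset.card_pair haa']
      have hpath : IsKPath H 2 [M, J'] := by
        refine ⟨by simp, ?_, ?_⟩
        · intro K' hK'
          rcases List.mem_cons.mp hK' with rfl | hK'
          · exact hMA.2
          · have : K' = J' := by simpa using hK'
            rw [this]; exact hJ'A.2
        · refine List.isChain_cons_cons.mpr ⟨⟨huH, hucard⟩, by simp⟩
      exact component_absorb hB.1 ⟨hJ'N, hJ'A.2⟩ hMB hpath ⟨rfl, by simp [Joins]⟩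
        (by rintro K' hK'
            rcases List.mem_cons.mp hK' with rfl | hK'
            · exact Or.inl hMB
            · have : K' = J' := by simpa using hK'
              rw [this]; exact Or.inr rfl)
  exact hne (components_eq_aux hB' hB.1 ⟨J', hJ'B', hJ'B⟩)
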